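/- Let P be a two-orbit n-polytope in class 2_I with base flag Φ, and fix l ∈ N. Define Γ_l^- and Γ_l^+ as the subgroups generated by the distinguished generators with all indices < l, respectively all indices > l. Then every element of Γ_l^- commutes with every element of Γ_l^+, Γ_l^- ∩ Γ_l^+ = 1, and the product Γ_l^- Γ_l^+ is a subgroup of the stabilizer Γ_l of Φ_l isomorphic to Γ_l^- × Γ_l^+. -/

import Mathlib

/-- An abstract polytope of rank `n`, presented by a partially ordered type of faces
with a strictly monotone rank function onto `{-1, 0, ..., n}`, such that every flag
(maximal chain) has exactly one face of each rank (`faceAt`), every flag has a unique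
`i`-adjacent flag for each `i = 0, ..., n-1` (the diamond condition, via `adj`), and
which is strongly flag-connected. -/
structure AbstractPolytope (n : ℕ) (Face : Type*) [PartialOrder Face] where
  rank : Face → ℤ
  rank_strictMono : ∀ {F G : Face}, F < G → rank F < rank G
  rank_le : ∀ F : Face, -1 ≤ rank F ∧ rank F ≤ (n : ℤ)
  /-- the unique face of rank `i` in the flag `Φ`, for `-1 ≤ i ≤ n` -/
  faceAt : Flag Face → ℤ → Face
  faceAt_mem : ∀ (Φ : Flag Face) (i : ℤ), -1 ≤ i → i ≤ (n : ℤ) → faceAt Φ i ∈ Φ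
  faceAt_rank : ∀ (Φ : Flag Face) (i : ℤ), -1 ≤ i → i ≤ (n : ℤ) → rank (faceAt Φ i) = i
  faceAt_eq : ∀ (Φ : Flag Face) (F : Face), F ∈ Φ → faceAt Φ (rank F) = F
  /-- the unique `i`-adjacent flag of `Φ`, for `0 ≤ i ≤ n-1` -/
  adj : Flag Face → ℕ → Flag Face
  adj_ne : ∀ (Φ : Flag Face) (i : ℕ), i < n → adj Φ i ≠ Φ
  adj_mem : ∀ (Φ : Flag Face) (i : ℕ), i < n →
    ∀ F ∈ Φ, rank F ≠ (i : ℤ) → F ∈ adj Φ i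
  adj_unique : ∀ (Φ Ψ : Flag Face) (i : ℕ), i < n → Ψ ≠ Φ →
    (∀ F ∈ Φ, rank F ≠ (i : ℤ) → F ∈ Ψ) → Ψ = adj Φ i
  /-- strong flag-connectedness: any two flags are joined by a sequence of successively
  adjacent flags, with all adjacencies at ranks not occurring among their common faces -/
  connected : ∀ Φ Ψ : Flag Face, ∃ (l : ℕ) (c : ℕ → Flag Face), c 0 = Φ ∧ c l = Ψ ∧
    ∀ m < l, ∃ i : ℕ, i < n ∧ c (m + 1) = adj (c m) i ∧
      ∀ F : Face, F ∈ Φ → F ∈ Ψ → rank F ≠ (i : ℤ)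

namespace AbstractPolytope

variable {n : ℕ} {Face : Type*} [PartialOrder Face]

/-- The automorphism group `Γ(P)`: order automorphisms of the set of faces.
It acts on flags via `Flag.map`; `g • Φ` denotes the image flag. -/
instance : MulAction (Face ≃o Face) (Flag Face) where
  smul g Φ := Flag.map g Φ
  one_smul Φ := by
    show Flag.map 1 Φ = Φ
    ext x
    simp [Flag.map, Flag.ofIsMaxChain]
  mul_smul g h Φ := by
    show Flag.map (g * h) Φ = Flag.map g (Flag.map h Φ)
    ext x
    simp [Flag.map, Flag.ofIsMaxChain, Set.image_image]

lemma smul_flag_def (g : Face ≃o Face) (Φ : Flag Face) : g • Φ = Flag.map g Φ := rfl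

/-- Two flags lie in the same orbit under the automorphism group. -/
def SameOrbit (Φ Ψ : Flag Face) : Prop := ∃ g : Face ≃o Face, g • Φ = Ψ

/-- The polytope has exactly two orbits on flags. -/
def TwoOrbit (_A : AbstractPolytope n Face) : Prop :=
  ∃ Φ Ψ : Flag Face, ¬ SameOrbit Φ Ψ ∧ ∀ X : Flag Face, SameOrbit X Φ ∨ SameOrbit X Ψ

/-- `I` is the class type set of the two-orbit polytope `A`: it consists precisely of
those ranks `i ∈ {0,...,n-1}` such that every flag and its `i`-adjacent flag lie in the
same orbit; that is, `A` is in the class `2_I`. -/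
def InClass (A : AbstractPolytope n Face) (I : Set ℕ) : Prop :=
  (∀ i ∈ I, i < n) ∧ ∀ i : ℕ, i < n → (i ∈ I ↔ ∀ Φ : Flag Face, SameOrbit Φ (A.adj Φ i))

/-- The stabilizer in the automorphism group of a face `F`. -/
def faceStab (_A : AbstractPolytope n Face) (F : Face) : Subgroup (Face ≃o Face) where
  carrier := {g : Face ≃o Face | g F = F}
  one_mem' := rfl
  mul_mem' := by
    intro a b ha hb
    show (a * b) F = F
    rw [RelIso.mul_apply]
    rw [show b F = F from hb, show a F = F from ha]
  inv_mem' := by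
    intro a ha
    show a⁻¹ F = F
    conv_lhs => rw [← show a F = F from ha]
    exact a.symm_apply_apply F

lemma mem_faceStab {A : AbstractPolytope n Face} {F : Face} {g : Face ≃o Face} :
    g ∈ A.faceStab F ↔ g F = F := Iff.rfl

end AbstractPolytope

section Stmt15Aux

open AbstractPolytope

variable {n : ℕ} {Face : Type*} [PartialOrder Face]

lemma ap_coe_smul (g : Face ≃o Face) (Φ : Flag Face) :
    ((g • Φ : Flag Face) : Set Face) = ⇑g '' ↑Φ := by
  rw [smul_flag_def]; rfl

lemma ap_mem_smul {g : Face ≃o Face} {Φ : Flag Face} {F : Face} :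
    F ∈ g • Φ ↔ ∃ F' ∈ Φ, g F' = F := by
  rw [← SetLike.mem_coe, ap_coe_smul]
  exact Set.mem_image _ _ _

lemma ap_smul_mem {g : Face ≃o Face} {Φ : Flag Face} {F : Face} (h : F ∈ Φ) :
    g F ∈ g • Φ := ap_mem_smul.2 ⟨F, h, rfl⟩

variable (A : AbstractPolytope n Face)

lemma faceAt_lt (Φ : Flag Face) {r s : ℤ} (h1 : -1 ≤ r) (h2 : r < s) (h3 : s ≤ (n : ℤ)) :
    A.faceAt Φ r < A.faceAt Φ s := by
  have hrn : r ≤ (n : ℤ) := le_trans h2.le h3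
  have hs1 : -1 ≤ s := le_trans h1 h2.le
  have hmr := A.faceAt_mem Φ r h1 hrn
  have hms := A.faceAt_mem Φ s hs1 h3
  have hrr := A.faceAt_rank Φ r h1 hrn
  have hss := A.faceAt_rank Φ s hs1 h3
  rcases Φ.le_or_le hmr hms with h | h
  · rcases h.lt_or_eq with h' | h'
    · exact h'
    · rw [h'] at hrr; omega
  · rcases h.lt_or_eq with h' | h'
    · have := A.rank_strictMono h'; omega
    · rw [h'] at hss; omega

lemma flag_eq_of_faceAt {Φ Ψ : Flag Face}
    (h : ∀ r : ℤ, -1 ≤ r → r ≤ (n : ℤ) → A.faceAt Φ r = A.faceAt Ψ r) : Φ = Ψ := by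
  ext F
  constructor
  · intro hF
    have h1 := (A.rank_le F).1
    have h2 := (A.rank_le F).2
    have e := A.faceAt_eq Φ F hF
    rw [← e, h _ h1 h2]
    exact A.faceAt_mem Ψ _ h1 h2
  · intro hF
    have h1 := (A.rank_le F).1
    have h2 := (A.rank_le F).2
    have e := A.faceAt_eq Ψ F hF
    rw [← e, ← h _ h1 h2]
    exact A.faceAt_mem Φ _ h1 h2

lemma faceAt_adj_of_ne (Φ : Flag Face) {i : ℕ} (hi : i < n) {r : ℤ}
    (h1 : -1 ≤ r) (h2 : r ≤ (n : ℤ)) (hne : r ≠ (i : ℤ)) :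
    A.faceAt (A.adj Φ i) r = A.faceAt Φ r := by
  have hm := A.faceAt_mem Φ r h1 h2
  have hr := A.faceAt_rank Φ r h1 h2
  have hmem : A.faceAt Φ r ∈ A.adj Φ i := A.adj_mem Φ i hi _ hm (by rw [hr]; exact hne)
  have e := A.faceAt_eq (A.adj Φ i) _ hmem
  rw [hr] at e; exact e

lemma faceAt_adj_self_ne (Φ : Flag Face) {i : ℕ} (hi : i < n) :
    A.faceAt (A.adj Φ i) (i : ℤ) ≠ A.faceAt Φ (i : ℤ) := by
  intro h
  apply A.adj_ne Φ i hi
  apply flag_eq_of_faceAt A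
  intro r h1 h2
  by_cases hr : r = (i : ℤ)
  · rw [hr]; exact h
  · exact faceAt_adj_of_ne A Φ hi h1 h2 hr

lemma mem_of_mem_adj (Φ : Flag Face) {i : ℕ} (hi : i < n) {F : Face}
    (hF : F ∈ A.adj Φ i) (hr : A.rank F ≠ (i : ℤ)) : F ∈ Φ := by
  have h1 := (A.rank_le F).1
  have h2 := (A.rank_le F).2
  have e := A.faceAt_eq (A.adj Φ i) F hF
  rw [faceAt_adj_of_ne A Φ hi h1 h2 hr] at e
  rw [← e]
  exact A.faceAt_mem Φ _ h1 h2

lemma adj_adj (Φ : Flag Face) {i : ℕ} (hi : i < n) : A.adj (A.adj Φ i) i = Φ := by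
  refine (A.adj_unique (A.adj Φ i) Φ i hi (Ne.symm (A.adj_ne Φ i hi)) ?_).symm
  intro F hF hr
  exact mem_of_mem_adj A Φ hi hF hr

lemma int_id_aux {f : ℤ → ℤ} {a b : ℤ}
    (hmono : ∀ r s, a ≤ r → r < s → s ≤ b → f r < f s)
    (hmem : ∀ r, a ≤ r → r ≤ b → a ≤ f r ∧ f r ≤ b) :
    ∀ r, a ≤ r → r ≤ b → f r = r := by
  have key : ∀ d : ℕ, ∀ r, a ≤ r → r + (d : ℤ) ≤ b → f r + (d : ℤ) ≤ f (r + (d : ℤ)) := by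
    intro d
    induction d with
    | zero => intro r _ _; simp
    | succ k ih =>
      intro r hr hrb
      have hc : ((k + 1 : ℕ) : ℤ) = (k : ℤ) + 1 := by push_cast; ring
      rw [hc] at hrb ⊢
      have h1 : f r + (k : ℤ) ≤ f (r + (k : ℤ)) := ih r hr (by omega)
      have h2 : f (r + (k : ℤ)) < f (r + (k : ℤ) + 1) :=
        hmono _ _ (by omega) (by omega) (by omega)
      have e : r + ((k : ℤ) + 1) = r + (k : ℤ) + 1 := by ring
      rw [e]
      omega
  intro r hra hrb
  have h1 := key (r - a).toNat a le_rfl (by omega)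
  have h2 := key (b - r).toNat r hra (by omega)
  have e1 : a + ((r - a).toNat : ℤ) = r := by omega
  have e2 : r + ((b - r).toNat : ℤ) = b := by omega
  rw [e1] at h1
  rw [e2] at h2
  have ha := hmem a le_rfl (le_trans hra hrb)
  have hb := hmem b (le_trans hra hrb) le_rfl
  have hr' := hmem r hra hrb
  omega

lemma smul_faceAt (g : Face ≃o Face) (Φ : Flag Face) {r : ℤ}
    (h1 : -1 ≤ r) (h2 : r ≤ (n : ℤ)) :
    g (A.faceAt Φ r) = A.faceAt (g • Φ) r := by
  have hmono : ∀ r s, -1 ≤ r → r < s → s ≤ (n : ℤ) →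
      A.rank (g (A.faceAt Φ r)) < A.rank (g (A.faceAt Φ s)) := by
    intro r s h1 h2 h3
    exact A.rank_strictMono (g.strictMono (faceAt_lt A Φ h1 h2 h3))
  have hmem : ∀ r, -1 ≤ r → r ≤ (n : ℤ) →
      -1 ≤ A.rank (g (A.faceAt Φ r)) ∧ A.rank (g (A.faceAt Φ r)) ≤ (n : ℤ) :=
    fun r _ _ => A.rank_le _
  have hfr : A.rank (g (A.faceAt Φ r)) = r := int_id_aux hmono hmem r h1 h2
  have hmem2 : g (A.faceAt Φ r) ∈ g • Φ := ap_smul_mem (A.faceAt_mem Φ r h1 h2)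
  have e := A.faceAt_eq (g • Φ) _ hmem2
  rw [hfr] at e
  exact e.symm

lemma rank_smul (g : Face ≃o Face) {Φ : Flag Face} {F : Face} (hF : F ∈ Φ) :
    A.rank (g F) = A.rank F := by
  have h1 := (A.rank_le F).1
  have h2 := (A.rank_le F).2
  have e := A.faceAt_eq Φ F hF
  conv_lhs => rw [← e]
  rw [smul_faceAt A g Φ h1 h2]
  exact A.faceAt_rank _ _ h1 h2

lemma smul_adj (g : Face ≃o Face) (Φ : Flag Face) {i : ℕ} (hi : i < n) :
    g • A.adj Φ i = A.adj (g • Φ) i := by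
  apply A.adj_unique (g • Φ) (g • A.adj Φ i) i hi
  · intro h
    exact A.adj_ne Φ i hi (MulAction.injective g h)
  · intro F hF hr
    obtain ⟨F', hF', rfl⟩ := ap_mem_smul.1 hF
    have hr' : A.rank F' ≠ (i : ℤ) := by rw [← rank_smul A g hF']; exact hr
    exact ap_smul_mem (A.adj_mem Φ i hi F' hF' hr')

include A in
lemma smul_fix_pointwise {g : Face ≃o Face} {Φ : Flag Face} (h : g • Φ = Φ)
    {F : Face} (hF : F ∈ Φ) : g F = F := by
  have e := smul_faceAt A g Φ (A.rank_le F).1 (A.rank_le F).2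
  rw [A.faceAt_eq Φ F hF, h, A.faceAt_eq Φ F hF] at e
  exact e

include A in
lemma eq_one_of_fix_flag {g : Face ≃o Face} {Φ : Flag Face} (h : g • Φ = Φ) : g = 1 := by
  have key : ∀ Ψ : Flag Face, g • Ψ = Ψ := by
    intro Ψ
    obtain ⟨L, c, hc0, hcL, hstep⟩ := A.connected Φ Ψ
    have hfix : ∀ m, m ≤ L → g • c m = c m := by
      intro m
      induction m with
      | zero => intro _; rw [hc0]; exact h
      | succ k ih =>
        intro hk
        obtain ⟨i, hi, hadj, -⟩ := hstep k (by omega)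
        rw [hadj, smul_adj A g (c k) hi, ih (by omega)]
    rw [← hcL]; exact hfix L le_rfl
  ext F
  have hch : IsChain (· ≤ ·) ({F} : Set Face) := Set.subsingleton_singleton.pairwise _
  obtain ⟨M, hM, hsub⟩ := hch.exists_maxChain
  have hFM : F ∈ Flag.ofIsMaxChain M hM := hsub rfl
  have := smul_fix_pointwise A (key (Flag.ofIsMaxChain M hM)) hFM
  simpa using this

lemma rank_i_between (Φ : Flag Face) {i : ℕ} (hi : i < n) {H : Face}
    (hrH : A.rank H = (i : ℤ))
    (hlow : A.faceAt Φ ((i : ℤ) - 1) < H) (hhigh : H < A.faceAt Φ ((i : ℤ) + 1)) :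
    H = A.faceAt Φ (i : ℤ) ∨ H = A.faceAt (A.adj Φ i) (i : ℤ) := by
  by_cases hH : H = A.faceAt Φ (i : ℤ)
  · left; exact hH
  right
  have hcmp : ∀ F, F ∈ Φ → A.rank F ≠ (i : ℤ) → F < H ∨ H < F := by
    intro F hF hr
    have h1 := (A.rank_le F).1
    have h2 := (A.rank_le F).2
    have e := A.faceAt_eq Φ F hF
    rcases lt_or_gt_of_ne hr with hlt | hgt
    · left
      have hle : F ≤ A.faceAt Φ ((i : ℤ) - 1) := by
        rcases eq_or_lt_of_le (show A.rank F ≤ (i : ℤ) - 1 by omega) with he | hl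
        · rw [← e, he]
        · rw [← e]
          exact le_of_lt (faceAt_lt A Φ h1 hl (by omega))
      exact lt_of_le_of_lt hle hlow
    · right
      have hle : A.faceAt Φ ((i : ℤ) + 1) ≤ F := by
        rcases eq_or_lt_of_le (show (i : ℤ) + 1 ≤ A.rank F by omega) with he | hl
        · rw [← e, ← he]
        · rw [← e]
          exact le_of_lt (faceAt_lt A Φ (by omega) hl h2)
      exact lt_of_lt_of_le hhigh hle
  have hchain : IsChain (· ≤ ·) ({F | F ∈ Φ ∧ A.rank F ≠ (i : ℤ)} ∪ {H}) := by
    rintro x (⟨hx, hrx⟩ | hx) y (⟨hy, hry⟩ | hy) hxy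
    · exact Φ.le_or_le hx hy
    · rcases hy with rfl
      rcases hcmp x hx hrx with h | h
      · exact Or.inl h.le
      · exact Or.inr h.le
    · rcases hx with rfl
      rcases hcmp y hy hry with h | h
      · exact Or.inr h.le
      · exact Or.inl h.le
    · rcases hx with rfl; rcases hy with rfl; exact Or.inl le_rfl
  obtain ⟨M, hM, hsub⟩ := hchain.exists_maxChain
  have hHΘ : H ∈ Flag.ofIsMaxChain M hM := hsub (Or.inr rfl)
  have hsubΦ : ∀ F ∈ Φ, A.rank F ≠ (i : ℤ) → F ∈ Flag.ofIsMaxChain M hM :=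
    fun F hF hr => hsub (Or.inl ⟨hF, hr⟩)
  have hne : Flag.ofIsMaxChain M hM ≠ Φ := by
    intro he
    apply hH
    rw [← hrH]
    exact (A.faceAt_eq Φ H (he ▸ hHΘ)).symm
  have hΘ : Flag.ofIsMaxChain M hM = A.adj Φ i := A.adj_unique Φ _ i hi hne hsubΦ
  have e := A.faceAt_eq (Flag.ofIsMaxChain M hM) H hHΘ
  rw [hrH, hΘ] at e
  exact e.symm

lemma adj_comm (Φ : Flag Face) {i k : ℕ} (hk : k < n) (hik : i + 1 < k) :
    A.adj (A.adj Φ i) k = A.adj (A.adj Φ k) i := by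
  have hi : i < n := by omega
  have hne_ik : (k : ℤ) ≠ (i : ℤ) := by omega
  refine (A.adj_unique (A.adj Φ i) (A.adj (A.adj Φ k) i) k hk ?_ ?_).symm
  · intro h
    have e1 : A.faceAt (A.adj (A.adj Φ k) i) (k : ℤ) = A.faceAt (A.adj Φ k) (k : ℤ) :=
      faceAt_adj_of_ne A (A.adj Φ k) hi (by omega) (by omega) hne_ik
    have e2 : A.faceAt (A.adj Φ i) (k : ℤ) = A.faceAt Φ (k : ℤ) :=
      faceAt_adj_of_ne A Φ hi (by omega) (by omega) hne_ik
    rw [h, e2] at e1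
    exact faceAt_adj_self_ne A Φ hk e1.symm
  · intro F hF hrk
    have h1 := (A.rank_le F).1
    have h2 := (A.rank_le F).2
    by_cases hri : A.rank F = (i : ℤ)
    · have hGF : A.faceAt (A.adj Φ i) (i : ℤ) = F := by
        rw [← hri]; exact A.faceAt_eq _ F hF
      have elow : A.faceAt (A.adj (A.adj Φ k) i) ((i : ℤ) - 1) = A.faceAt Φ ((i : ℤ) - 1) := by
        rw [faceAt_adj_of_ne A (A.adj Φ k) hi (by omega) (by omega) (by omega),
          faceAt_adj_of_ne A Φ hk (by omega) (by omega) (by omega)]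
      have ehigh : A.faceAt (A.adj (A.adj Φ k) i) ((i : ℤ) + 1) = A.faceAt Φ ((i : ℤ) + 1) := by
        rw [faceAt_adj_of_ne A (A.adj Φ k) hi (by omega) (by omega) (by omega),
          faceAt_adj_of_ne A Φ hk (by omega) (by omega) (by omega)]
      have hlow : A.faceAt Φ ((i : ℤ) - 1) < A.faceAt (A.adj (A.adj Φ k) i) (i : ℤ) := by
        rw [← elow]
        exact faceAt_lt A _ (by omega) (by omega) (by omega)
      have hhigh : A.faceAt (A.adj (A.adj Φ k) i) (i : ℤ) < A.faceAt Φ ((i : ℤ) + 1) := by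
        rw [← ehigh]
        exact faceAt_lt A _ (by omega) (by omega) (by omega)
      have hrΛ : A.rank (A.faceAt (A.adj (A.adj Φ k) i) (i : ℤ)) = (i : ℤ) :=
        A.faceAt_rank _ _ (by omega) (by omega)
      rcases rank_i_between A Φ hi hrΛ hlow hhigh with h | h
      · exfalso
        have h1' := faceAt_adj_self_ne A (A.adj Φ k) hi
        have h2' : A.faceAt (A.adj Φ k) (i : ℤ) = A.faceAt Φ (i : ℤ) :=
          faceAt_adj_of_ne A Φ hk (by omega) (by omega) (by omega)
        exact h1' (by rw [h, h2'])
      · rw [← hGF, ← h]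
        exact A.faceAt_mem _ _ (by omega) (by omega)
    · have hFΦ : F ∈ Φ := mem_of_mem_adj A Φ hi hF hri
      exact A.adj_mem _ i hi F (A.adj_mem Φ k hk F hFΦ hrk) hri

/-- Apply a word of adjacencies (rightmost entry of the list applied first). -/
def wordFlag : List ℕ → Flag Face → Flag Face
  | [], Ψ => Ψ
  | i :: L, Ψ => A.adj (wordFlag L Ψ) i

lemma wordFlag_append (L1 L2 : List ℕ) (Ψ : Flag Face) :
    wordFlag A (L1 ++ L2) Ψ = wordFlag A L1 (wordFlag A L2 Ψ) := by
  induction L1 with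
  | nil => rfl
  | cons i L ih =>
    show A.adj (wordFlag A (L ++ L2) Ψ) i = A.adj (wordFlag A L (wordFlag A L2 Ψ)) i
    rw [ih]

lemma smul_wordFlag (g : Face ≃o Face) {L : List ℕ} (hL : ∀ i ∈ L, i < n) (Ψ : Flag Face) :
    g • wordFlag A L Ψ = wordFlag A L (g • Ψ) := by
  induction L with
  | nil => rfl
  | cons i L ih =>
    simp only [wordFlag]
    rw [smul_adj A g _ (hL i List.mem_cons_self),
      ih (fun j hj => hL j (List.mem_cons_of_mem i hj))]

lemma wordFlag_reverse {L : List ℕ} (hL : ∀ i ∈ L, i < n) (Ψ : Flag Face) :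
    wordFlag A L.reverse (wordFlag A L Ψ) = Ψ := by
  induction L generalizing Ψ with
  | nil => rfl
  | cons i L ih =>
    simp only [List.reverse_cons, wordFlag]
    rw [wordFlag_append]
    rw [show wordFlag A [i] (A.adj (wordFlag A L Ψ) i)
        = A.adj (A.adj (wordFlag A L Ψ) i) i from rfl,
      adj_adj A _ (hL i List.mem_cons_self)]
    exact ih (fun j hj => hL j (List.mem_cons_of_mem i hj)) Ψ

lemma adj_wordFlag_comm {l : ℕ} {i : ℕ} (hil : i < l) {L : List ℕ}
    (hL : ∀ k ∈ L, l < k ∧ k < n) (Ψ : Flag Face) :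
    A.adj (wordFlag A L Ψ) i = wordFlag A L (A.adj Ψ i) := by
  induction L with
  | nil => rfl
  | cons k L ih =>
    have hk := hL k List.mem_cons_self
    simp only [wordFlag]
    rw [← adj_comm A _ hk.2 (by omega), ih (fun j hj => hL j (List.mem_cons_of_mem k hj))]

lemma wordFlag_comm {l : ℕ} {L1 L2 : List ℕ} (h1 : ∀ i ∈ L1, i < l)
    (h2 : ∀ k ∈ L2, l < k ∧ k < n) (Ψ : Flag Face) :
    wordFlag A L1 (wordFlag A L2 Ψ) = wordFlag A L2 (wordFlag A L1 Ψ) := by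
  induction L1 with
  | nil => rfl
  | cons i L ih =>
    simp only [wordFlag]
    rw [ih (fun j hj => h1 j (List.mem_cons_of_mem i hj)),
      adj_wordFlag_comm A (h1 i List.mem_cons_self) h2]

lemma exists_word_of_mem_closure (Φ : Flag Face) (S : Set (Face ≃o Face)) (P : ℕ → Prop)
    (hgen : ∀ x ∈ S, ∃ L : List ℕ, (∀ i ∈ L, P i ∧ i < n) ∧ x • Φ = wordFlag A L Φ)
    {g : Face ≃o Face} (hg : g ∈ Subgroup.closure S) :
    ∃ L : List ℕ, (∀ i ∈ L, P i ∧ i < n) ∧ g • Φ = wordFlag A L Φ := by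
  induction hg using Subgroup.closure_induction with
  | mem x hx => exact hgen x hx
  | one => exact ⟨[], by simp, by rw [one_smul]; rfl⟩
  | mul a b ha hb iha ihb =>
    obtain ⟨La, hLa, ea⟩ := iha
    obtain ⟨Lb, hLb, eb⟩ := ihb
    refine ⟨Lb ++ La, ?_, ?_⟩
    · intro i hi
      rcases List.mem_append.1 hi with h | h
      · exact hLb i h
      · exact hLa i h
    · rw [mul_smul, eb, smul_wordFlag A a (fun i hi => (hLb i hi).2), ea, ← wordFlag_append]
  | inv a ha iha =>
    obtain ⟨L, hL, e⟩ := iha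
    refine ⟨L.reverse, fun i hi => hL i (List.mem_reverse.1 hi), ?_⟩
    have h1 : wordFlag A L (a⁻¹ • Φ) = Φ := by
      rw [← smul_wordFlag A a⁻¹ (fun i hi => (hL i hi).2), ← e, inv_smul_smul]
    have h2 := wordFlag_reverse A (fun i hi => (hL i hi).2) (a⁻¹ • Φ)
    rw [h1] at h2
    exact h2.symm

lemma wordFlag_faceAt {L : List ℕ} (hL : ∀ i ∈ L, i < n) (Ψ : Flag Face) {r : ℤ}
    (h1 : -1 ≤ r) (h2 : r ≤ (n : ℤ)) (hne : ∀ i ∈ L, (i : ℤ) ≠ r) :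
    A.faceAt (wordFlag A L Ψ) r = A.faceAt Ψ r := by
  induction L with
  | nil => rfl
  | cons i L ih =>
    simp only [wordFlag]
    rw [faceAt_adj_of_ne A _ (hL i List.mem_cons_self) h1 h2
        (Ne.symm (hne i List.mem_cons_self)),
      ih (fun j hj => hL j (List.mem_cons_of_mem i hj))
        (fun j hj => hne j (List.mem_cons_of_mem i hj))]

end Stmt15Aux

open Pointwise in
open AbstractPolytope in
/-- The subgroups `Γ_l⁻` and `Γ_l⁺`, generated by the distinguished
generators with all indices `< l`, resp. `> l`, centralize each other, intersect
trivially, and their product is a subgroup of the stabilizer `Γ_l` of `Φ_l` isomorphic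
to the direct product `Γ_l⁻ × Γ_l⁺`. -/
theorem stmt15 {n : ℕ} {Face : Type*} [PartialOrder Face] (A : AbstractPolytope n Face)
    (I : Set ℕ) (h2 : A.TwoOrbit) (hI : A.InClass I)
    (Φ : Flag Face)
    (ρ : ℕ → (Face ≃o Face)) (α : ℕ → ℕ → (Face ≃o Face)) (β : ℕ → ℕ → (Face ≃o Face))
    (hρ : ∀ i ∈ I, (ρ i) • Φ = A.adj Φ i)
    (hα : ∀ j k : ℕ, j < n → k < n → j ∉ I → k ∉ I →
        (α j k) • Φ = A.adj (A.adj Φ j) k)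
    (hβ : ∀ j : ℕ, ∀ i ∈ I, j < n → j ∉ I →
        (β j i) • Φ = A.adj (A.adj (A.adj Φ j) i) j)
    (l : ℕ) (hl : l < n) :
    ∀ Gm Gp : Subgroup (Face ≃o Face),
      Gm = Subgroup.closure
        ({x : Face ≃o Face | ∃ i ∈ I, i < l ∧ x = ρ i}
          ∪ {x : Face ≃o Face | ∃ j k : ℕ, j ∉ I ∧ k ∉ I ∧ j < l ∧ k < l ∧ x = α j k}
          ∪ {x : Face ≃o Face | ∃ j : ℕ, ∃ i ∈ I, j ∉ I ∧ j < l ∧ i < l ∧ x = β j i}) →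
      Gp = Subgroup.closure
        ({x : Face ≃o Face | ∃ i ∈ I, l < i ∧ x = ρ i}
          ∪ {x : Face ≃o Face | ∃ j k : ℕ, j < n ∧ k < n ∧ j ∉ I ∧ k ∉ I ∧
              l < j ∧ l < k ∧ x = α j k}
          ∪ {x : Face ≃o Face | ∃ j : ℕ, ∃ i ∈ I, j < n ∧ j ∉ I ∧ l < j ∧ l < i ∧
              x = β j i}) →
      (∀ g ∈ Gm, ∀ h ∈ Gp, g * h = h * g)
      ∧ Gm ⊓ Gp = ⊥
      ∧ ∃ H : Subgroup (Face ≃o Face),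
          (H : Set (Face ≃o Face)) = (Gm : Set (Face ≃o Face)) * (Gp : Set (Face ≃o Face))
          ∧ H ≤ A.faceStab (A.faceAt Φ (l : ℤ))
          ∧ Nonempty (H ≃* Gm × Gp) := by
  intro Gm Gp hGm hGp
  have hln : (l : ℤ) ≤ (n : ℤ) := by exact_mod_cast hl.le
  -- word representations for elements of Gm and Gp
  have repm : ∀ g ∈ Gm, ∃ L : List ℕ, (∀ i ∈ L, i < l ∧ i < n) ∧ g • Φ = wordFlag A L Φ := by
    intro g hg
    rw [hGm] at hg
    refine exists_word_of_mem_closure A Φ _ (fun i => i < l) ?_ hg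
    rintro x ((⟨i, hiI, hil, rfl⟩ | ⟨j, k, hjI, hkI, hjl, hkl, rfl⟩) |
      ⟨j, i, hiI, hjI, hjl, hil, rfl⟩)
    · refine ⟨[i], ?_, by rw [hρ i hiI]; rfl⟩
      intro m hm
      fin_cases hm
      exact ⟨hil, hI.1 i hiI⟩
    · refine ⟨[k, j], ?_, by rw [hα j k (by omega) (by omega) hjI hkI]; rfl⟩
      intro m hm
      fin_cases hm
      · exact ⟨hkl, by omega⟩
      · exact ⟨hjl, by omega⟩
    · refine ⟨[j, i, j], ?_, by rw [hβ j i hiI (by omega) hjI]; rfl⟩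
      intro m hm
      fin_cases hm
      · exact ⟨hjl, by omega⟩
      · exact ⟨hil, hI.1 i hiI⟩
      · exact ⟨hjl, by omega⟩
  have repp : ∀ g ∈ Gp, ∃ L : List ℕ, (∀ k ∈ L, l < k ∧ k < n) ∧ g • Φ = wordFlag A L Φ := by
    intro g hg
    rw [hGp] at hg
    refine exists_word_of_mem_closure A Φ _ (fun k => l < k) ?_ hg
    rintro x ((⟨i, hiI, hil, rfl⟩ | ⟨j, k, hjn, hkn, hjI, hkI, hjl, hkl, rfl⟩) |
      ⟨j, i, hiI, hjn, hjI, hjl, hil, rfl⟩)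
    · refine ⟨[i], ?_, by rw [hρ i hiI]; rfl⟩
      intro m hm
      fin_cases hm
      exact ⟨hil, hI.1 i hiI⟩
    · refine ⟨[k, j], ?_, by rw [hα j k hjn hkn hjI hkI]; rfl⟩
      intro m hm
      fin_cases hm
      · exact ⟨hkl, hkn⟩
      · exact ⟨hjl, hjn⟩
    · refine ⟨[j, i, j], ?_, by rw [hβ j i hiI hjn hjI]; rfl⟩
      intro m hm
      fin_cases hm
      · exact ⟨hjl, hjn⟩
      · exact ⟨hil, hI.1 i hiI⟩
      · exact ⟨hjl, hjn⟩
  -- commuting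
  have hcommute : ∀ g ∈ Gm, ∀ h ∈ Gp, g * h = h * g := by
    intro g hg h hh
    obtain ⟨Lg, hLg, eg⟩ := repm g hg
    obtain ⟨Lh, hLh, eh⟩ := repp h hh
    have e1 : (g * h) • Φ = (h * g) • Φ := by
      rw [mul_smul, mul_smul, eh, eg, smul_wordFlag A g (fun i hi => (hLh i hi).2),
        smul_wordFlag A h (fun i hi => (hLg i hi).2), eg, eh]
      exact (wordFlag_comm A (fun i hi => (hLg i hi).1) hLh Φ).symm
    have e2 : ((h * g)⁻¹ * (g * h)) • Φ = Φ := by rw [mul_smul, e1, inv_smul_smul]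
    exact (inv_mul_eq_one.1 (eq_one_of_fix_flag A e2)).symm
  -- face fixing
  have fixm : ∀ g ∈ Gm, ∀ r : ℤ, (l : ℤ) ≤ r → r ≤ (n : ℤ) →
      g (A.faceAt Φ r) = A.faceAt Φ r := by
    intro g hg r hr1 hr2
    obtain ⟨L, hL, e⟩ := repm g hg
    rw [smul_faceAt A g Φ (by omega) hr2, e,
      wordFlag_faceAt A (fun i hi => (hL i hi).2) Φ (by omega) hr2
        (fun i hi => by have := (hL i hi).1; omega)]
  have fixp : ∀ g ∈ Gp, ∀ r : ℤ, -1 ≤ r → r ≤ (l : ℤ) →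
      g (A.faceAt Φ r) = A.faceAt Φ r := by
    intro g hg r hr1 hr2
    obtain ⟨L, hL, e⟩ := repp g hg
    rw [smul_faceAt A g Φ hr1 (by omega), e,
      wordFlag_faceAt A (fun i hi => (hL i hi).2) Φ hr1 (by omega)
        (fun i hi => by have := (hL i hi).1; omega)]
  -- trivial intersection
  have hbot : Gm ⊓ Gp = ⊥ := by
    ext g
    simp only [Subgroup.mem_inf, Subgroup.mem_bot]
    constructor
    · rintro ⟨hgm, hgp⟩
      refine eq_one_of_fix_flag A (Φ := Φ) ?_
      refine flag_eq_of_faceAt A ?_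
      intro r h1 h2
      rw [← smul_faceAt A g Φ h1 h2]
      by_cases hr : r ≤ (l : ℤ)
      · exact fixp g hgp r h1 hr
      · exact fixm g hgm r (by omega) h2
    · rintro rfl
      exact ⟨one_mem _, one_mem _⟩
  refine ⟨hcommute, hbot, ?_⟩
  -- the product subgroup
  let φ : Gm × Gp →* (Face ≃o Face) :=
    { toFun := fun p => (p.1 : Face ≃o Face) * (p.2 : Face ≃o Face)
      map_one' := by simp
      map_mul' := by
        rintro ⟨a, c⟩ ⟨b, d⟩
        simp only [Prod.mk_mul_mk, Subgroup.coe_mul]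
        have hcm : (b : Face ≃o Face) * (c : Face ≃o Face)
            = (c : Face ≃o Face) * (b : Face ≃o Face) := hcommute b b.2 c c.2
        have key : (b : Face ≃o Face) * ((c : Face ≃o Face) * (d : Face ≃o Face))
            = (c : Face ≃o Face) * ((b : Face ≃o Face) * (d : Face ≃o Face)) := by
          rw [← mul_assoc, hcm, mul_assoc]
        simp only [mul_assoc]
        rw [key] }
  have hφapp : ∀ p : Gm × Gp, φ p = (p.1 : Face ≃o Face) * (p.2 : Face ≃o Face) :=
    fun _ => rfl
  have hφinj : Function.Injective φ := by
    intro p q h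
    rw [hφapp, hφapp] at h
    have e2 : ((q.1 : Face ≃o Face))⁻¹ * (p.1 : Face ≃o Face) * (p.2 : Face ≃o Face)
        = (q.2 : Face ≃o Face) := by
      rw [mul_assoc, h, ← mul_assoc, inv_mul_cancel, one_mul]
    have e3 : ((q.1 : Face ≃o Face))⁻¹ * (p.1 : Face ≃o Face)
        = (q.2 : Face ≃o Face) * ((p.2 : Face ≃o Face))⁻¹ := by
      rw [← e2, mul_assoc, mul_inv_cancel, mul_one]
    have hxm : ((q.1 : Face ≃o Face))⁻¹ * (p.1 : Face ≃o Face) ∈ Gm :=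
      mul_mem (inv_mem q.1.2) p.1.2
    have hxp : ((q.1 : Face ≃o Face))⁻¹ * (p.1 : Face ≃o Face) ∈ Gp := by
      rw [e3]
      exact mul_mem q.2.2 (inv_mem p.2.2)
    have hx1 : ((q.1 : Face ≃o Face))⁻¹ * (p.1 : Face ≃o Face) = 1 := by
      have hm : ((q.1 : Face ≃o Face))⁻¹ * (p.1 : Face ≃o Face) ∈ Gm ⊓ Gp := ⟨hxm, hxp⟩
      rw [hbot, Subgroup.mem_bot] at hm
      exact hm
    have hp1 : (q.1 : Face ≃o Face) = (p.1 : Face ≃o Face) := inv_mul_eq_one.1 hx1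
    have hp2 : (p.2 : Face ≃o Face) = (q.2 : Face ≃o Face) := by
      rw [← hp1] at h
      exact mul_left_cancel h
    exact Prod.ext (Subtype.ext hp1.symm) (Subtype.ext hp2)
  refine ⟨φ.range, ?_, ?_, ?_⟩
  · ext x
    simp only [SetLike.mem_coe, MonoidHom.mem_range, Set.mem_mul]
    constructor
    · rintro ⟨⟨a, b⟩, rfl⟩
      exact ⟨a, a.2, b, b.2, rfl⟩
    · rintro ⟨a, ha, b, hb, rfl⟩
      exact ⟨⟨⟨a, ha⟩, ⟨b, hb⟩⟩, rfl⟩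
  · rintro x ⟨⟨a, b⟩, rfl⟩
    rw [AbstractPolytope.mem_faceStab]
    have : φ (a, b) = (a : Face ≃o Face) * (b : Face ≃o Face) := rfl
    rw [this, RelIso.mul_apply]
    rw [fixp (b : Face ≃o Face) b.2 (l : ℤ) (by omega) le_rfl,
      fixm (a : Face ≃o Face) a.2 (l : ℤ) le_rfl hln]
  · exact ⟨(MulEquiv.ofBijective φ.rangeRestrict
      ⟨fun p q h => hφinj (congrArg Subtype.val h), φ.rangeRestrict_surjective⟩).symm⟩
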